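/- Let n ≥ 1 be odd, let 0 ≤ θ_0 < θ_1 < ... < θ_{n-1} < 2π be real nodes, define β_i(θ) = ((−1)^i Π_{k≠i} sin((θ − θ_k)/2)) / (Σ_{j=0}^{n-1} (−1)^j Π_{k≠j} sin((θ − θ_k)/2)) and b_{i,j}(θ) = (2^j/j!) sin^j((θ − θ_i)/2) · β_i(θ)^{j+1}. Let θ ∈ ℝ satisfy sin((θ − θ_k)/2) ≠ 0 for all k and S(θ) := Σ_{k=0}^{n-1} (−1)^k / sin((θ − θ_k)/2) ≠ 0. Then b_{i,j}(θ) = (2^j (−1)^{i(j+1)} / j!) · (1/sin((θ − θ_i)/2)) / S(θ)^{j+1}. -/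

import Mathlib

open scoped BigOperators

/-- The pole-free form of Berrut's trigonometric basis function for odd `n`. -/
noncomputable def berrutBasisOdd (n : ℕ) (θ : Fin n → ℝ) (i : Fin n) (t : ℝ) : ℝ :=
  ((-1 : ℝ) ^ (i : ℕ) * ∏ k ∈ Finset.univ.erase i, Real.sin ((t - θ k) / 2)) /
    (∑ j : Fin n, (-1 : ℝ) ^ (j : ℕ) *
      ∏ k ∈ Finset.univ.erase j, Real.sin ((t - θ k) / 2))

/-- The trigonometric Hermite basis for odd `n`. -/
noncomputable def trigHermiteBasisOdd (n : ℕ) (θ : Fin n → ℝ) (i : Fin n) (j : ℕ)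
    (t : ℝ) : ℝ :=
  ((2 : ℝ) ^ j / (Nat.factorial j : ℝ)) * Real.sin ((t - θ i) / 2) ^ j *
    berrutBasisOdd n θ i t ^ (j + 1)

/-- for odd `n`, the closed form of the trigonometric Hermite basis:
`b_{i,j}(θ) = (2^j (−1)^{i(j+1)} / j!) csc((θ−θ_i)/2) / S(θ)^{j+1}` where
`S(θ) = Σ_k (−1)^k / sin((θ−θ_k)/2)`. -/
theorem trigHermiteBasisOdd_closed_form
    (n : ℕ) (hn : 1 ≤ n) (hodd : Odd n)
    (θ : Fin n → ℝ) (hθ : StrictMono θ)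
    (hθ0 : ∀ k, 0 ≤ θ k) (hθ2π : ∀ k, θ k < 2 * Real.pi)
    (t : ℝ) (ht : ∀ k, Real.sin ((t - θ k) / 2) ≠ 0)
    (hS : ∑ k : Fin n, (-1 : ℝ) ^ (k : ℕ) / Real.sin ((t - θ k) / 2) ≠ 0) :
    ∀ (i : Fin n) (j : ℕ),
      trigHermiteBasisOdd n θ i j t
        = ((2 : ℝ) ^ j * (-1 : ℝ) ^ ((i : ℕ) * (j + 1)) / (Nat.factorial j : ℝ)) *
            (1 / Real.sin ((t - θ i) / 2)) /
            (∑ k : Fin n, (-1 : ℝ) ^ (k : ℕ) / Real.sin ((t - θ k) / 2)) ^ (j + 1) := by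
  intro i j
  set s : Fin n → ℝ := fun k => Real.sin ((t - θ k) / 2) with hs
  set S : ℝ := ∑ k : Fin n, (-1 : ℝ) ^ (k : ℕ) / s k with hSdef
  set P : ℝ := ∏ k : Fin n, s k with hPdef
  have hP : P ≠ 0 := Finset.prod_ne_zero_iff.mpr fun k _ => ht k
  have herase : ∀ m : Fin n, ∏ k ∈ Finset.univ.erase m, s k = P / s m := by
    intro m
    rw [eq_div_iff (ht m), mul_comm, hPdef,
      Finset.mul_prod_erase Finset.univ s (Finset.mem_univ m)]
  have hden : (∑ m : Fin n, (-1 : ℝ) ^ (m : ℕ) *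
      ∏ k ∈ Finset.univ.erase m, s k) = P * S := by
    rw [hSdef, Finset.mul_sum]
    refine Finset.sum_congr rfl fun m _ => ?_
    rw [herase m]
    field_simp
  have hβ : berrutBasisOdd n θ i t = ((-1 : ℝ) ^ (i : ℕ) / s i) / S := by
    unfold berrutBasisOdd
    rw [show (∑ m : Fin n, (-1 : ℝ) ^ (m : ℕ) *
        ∏ k ∈ Finset.univ.erase m, Real.sin ((t - θ k) / 2)) = P * S from hden,
      show (∏ k ∈ Finset.univ.erase i, Real.sin ((t - θ k) / 2)) = P / s i from herase i]
    field_simp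
  unfold trigHermiteBasisOdd
  rw [hβ]
  have hfac : (Nat.factorial j : ℝ) ≠ 0 := Nat.cast_ne_zero.mpr (Nat.factorial_ne_zero j)
  have hsi : s i ≠ 0 := ht i
  rw [show Real.sin ((t - θ i) / 2) = s i from rfl]
  rw [div_pow, div_pow, pow_mul]
  field_simp
  ring
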